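/- Let λ, μ : ℕ → ℝ be arithmetic functions satisfying: (a) |λ(n)μ(n)| ≤ d(n)²·n^{7/32} for all n ≥ 1; (b) for every ε > 0 there is a constant C_ε such that |Σ_{x<n≤2x} λ(n)μ(n)| ≤ C_ε·x^{12/17+ε} for all x ≥ 1; (c) there exist c > 0 and x₀ ≥ 2 such that Σ_{x<n≤2x} λ(n)²μ(n)² ≥ c·x/(log x)² for all x ≥ x₀. Then there exists x₁ such that for every real x ≥ x₁ the interval (x, 2x] contains an integer n with λ(n)μ(n) < 0 and also an integer m with λ(m)μ(m) > 0. -/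

import Mathlib

lemma key1 (ε : ℝ) (hε : 0 < ε) (m : ℝ) (hm : 0 < m) (hm1 : m ≤ 1)
    (hm2 : m ≤ ε * Real.log 2) (a : ℕ) :
    (a + 1 : ℝ) ≤ (1/m) * (2:ℝ) ^ ((a:ℝ) * ε) := by
  have h1 : (2:ℝ) ^ ((a:ℝ) * ε) = Real.exp ((a:ℝ) * ε * Real.log 2) := by
    rw [Real.rpow_def_of_pos (by norm_num)]; ring_nf
  have h2 : (a:ℝ) * ε * Real.log 2 + 1 ≤ Real.exp ((a:ℝ) * ε * Real.log 2) :=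
    Real.add_one_le_exp _
  have ha0 : (0:ℝ) ≤ (a:ℝ) := Nat.cast_nonneg a
  have h3 : ((a:ℝ) + 1) * m ≤ (a:ℝ) * ε * Real.log 2 + 1 := by nlinarith
  rw [h1, div_mul_eq_mul_div, le_div_iff₀ hm]
  nlinarith

lemma key2 (ε : ℝ) (hε : 0 < ε) (p a : ℕ) (hp : (2:ℝ) ^ (1/ε) ≤ (p:ℝ)) :
    (a + 1 : ℝ) ≤ (p:ℝ) ^ ((a:ℝ) * ε) := by
  have hp0 : (0:ℝ) ≤ (p:ℝ) := Nat.cast_nonneg p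
  have h2 : (2:ℝ) ≤ (p:ℝ) ^ ε := by
    calc (2:ℝ) = ((2:ℝ) ^ (1/ε)) ^ ε := by
          rw [← Real.rpow_mul (by norm_num : (0:ℝ) ≤ 2), one_div,
            inv_mul_cancel₀ (ne_of_gt hε), Real.rpow_one]
      _ ≤ (p:ℝ) ^ ε := Real.rpow_le_rpow (by positivity) hp (le_of_lt hε)
  have h3 : (p:ℝ) ^ ((a:ℝ) * ε) = ((p:ℝ) ^ ε) ^ a := by
    rw [mul_comm, Real.rpow_mul hp0, Real.rpow_natCast]
  rw [h3]
  calc (a + 1 : ℝ) ≤ (2:ℝ) ^ a := by exact_mod_cast (Nat.lt_two_pow_self (n := a))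
    _ ≤ ((p:ℝ) ^ ε) ^ a := pow_le_pow_left₀ (by norm_num) h2 a

lemma divisor_bound (ε : ℝ) (hε : 0 < ε) :
    ∃ C : ℝ, 1 ≤ C ∧ ∀ n : ℕ, 1 ≤ n → (n.divisors.card : ℝ) ≤ C * (n : ℝ) ^ ε := by
  set m : ℝ := min 1 (ε * Real.log 2) with hm_def
  have hlog2 : 0 < Real.log 2 := Real.log_pos (by norm_num)
  have hm : 0 < m := lt_min one_pos (by positivity)
  have hm1 : m ≤ 1 := min_le_left _ _
  have hm2 : m ≤ ε * Real.log 2 := min_le_right _ _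
  set M : ℝ := 1 / m with hM_def
  have hM1 : 1 ≤ M := (le_div_iff₀ hm).2 (by linarith)
  have hM0 : 0 ≤ M := by linarith
  set K : ℕ := ⌈(2:ℝ) ^ (1/ε)⌉₊ with hK_def
  refine ⟨M ^ (K + 1), one_le_pow₀ hM1, ?_⟩
  intro n hn
  have hn0 : n ≠ 0 := by omega
  -- card divisors as a product
  have hd : (n.divisors.card : ℝ) = ∏ p ∈ n.primeFactors, ((n.factorization p : ℝ) + 1) := by
    rw [Nat.card_divisors hn0]
    push_cast
    rfl
  -- n^ε as a product
  have hnprod : (n : ℝ) = ∏ p ∈ n.primeFactors, (p:ℝ) ^ (n.factorization p) := by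
    conv_lhs => rw [← Nat.factorization_prod_pow_eq_self hn0]
    rw [Nat.prod_factorization_eq_prod_primeFactors]
    push_cast
    rfl
  have hne : (n:ℝ) ^ ε = ∏ p ∈ n.primeFactors, (p:ℝ) ^ ((n.factorization p : ℝ) * ε) := by
    rw [hnprod, ← Real.finset_prod_rpow _ _ (fun p _ => by positivity)]
    refine Finset.prod_congr rfl fun p hp => ?_
    rw [← Real.rpow_natCast (p:ℝ) (n.factorization p), ← Real.rpow_mul (Nat.cast_nonneg p)]
  -- pointwise bound
  have hpt : ∀ p ∈ n.primeFactors,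
      ((n.factorization p : ℝ) + 1) ≤
        (if p ≤ K then M else 1) * (p:ℝ) ^ ((n.factorization p : ℝ) * ε) := by
    intro p hp
    have hpprime : p.Prime := Nat.prime_of_mem_primeFactors hp
    have hp2 : (2:ℝ) ≤ (p:ℝ) := by exact_mod_cast hpprime.two_le
    by_cases hpK : p ≤ K
    · simp only [hpK, if_true]
      calc ((n.factorization p : ℝ) + 1) ≤ M * (2:ℝ) ^ ((n.factorization p : ℝ) * ε) :=
            key1 ε hε m hm hm1 hm2 _
        _ ≤ M * (p:ℝ) ^ ((n.factorization p : ℝ) * ε) := by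
            apply mul_le_mul_of_nonneg_left _ hM0
            exact Real.rpow_le_rpow (by norm_num) hp2 (by positivity)
    · simp only [hpK, if_false, one_mul]
      apply key2 ε hε
      have : (K:ℝ) < (p:ℝ) := by exact_mod_cast Nat.lt_of_not_le hpK
      calc (2:ℝ) ^ (1/ε) ≤ (K:ℝ) := Nat.le_ceil _
        _ ≤ (p:ℝ) := le_of_lt this
  -- combine
  have hmain : (n.divisors.card : ℝ) ≤
      (∏ p ∈ n.primeFactors, (if p ≤ K then M else 1)) * (n:ℝ) ^ ε := by
    rw [hd, hne, ← Finset.prod_mul_distrib]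
    exact Finset.prod_le_prod (fun p _ => by positivity) hpt
  refine hmain.trans (mul_le_mul_of_nonneg_right ?_ (by positivity))
  -- the if-product is at most M^(K+1)
  have h1 : (∏ p ∈ n.primeFactors, (if p ≤ K then M else 1))
      = ∏ p ∈ n.primeFactors.filter (· ≤ K), M := (Finset.prod_filter _ _).symm
  rw [h1, Finset.prod_const]
  apply pow_le_pow_right₀ hM1
  calc (n.primeFactors.filter (· ≤ K)).card ≤ (Finset.range (K+1)).card := by
        apply Finset.card_le_card
        intro p hp
        simp only [Finset.mem_filter] at hp
        exact Finset.mem_range.2 (Nat.lt_succ_of_le hp.2)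
    _ = K + 1 := Finset.card_range _

lemma sum_sq_le_of_sign (s : Finset ℕ) (f : ℕ → ℝ) (B : ℝ)
    (hB : ∀ n ∈ s, |f n| ≤ B)
    (hsign : (∀ n ∈ s, 0 ≤ f n) ∨ (∀ n ∈ s, f n ≤ 0)) :
    ∑ n ∈ s, (f n) ^ 2 ≤ B * |∑ n ∈ s, f n| := by
  rcases hsign with h | h
  · have hsum : 0 ≤ ∑ n ∈ s, f n := Finset.sum_nonneg h
    rw [abs_of_nonneg hsum, Finset.mul_sum]
    refine Finset.sum_le_sum fun n hn => ?_
    have h1 := h n hn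
    have h2 := hB n hn
    rw [abs_of_nonneg h1] at h2
    nlinarith
  · have hsum : ∑ n ∈ s, f n ≤ 0 := Finset.sum_nonpos h
    rw [abs_of_nonpos hsum, ← Finset.sum_neg_distrib, Finset.mul_sum]
    refine Finset.sum_le_sum fun n hn => ?_
    have h1 := h n hn
    have h2 := hB n hn
    rw [abs_of_nonpos h1] at h2
    nlinarith

set_option maxHeartbeats 1000000 in
/-- Theorem 1.1 in conditional form: coefficients satisfying the Kim–Sarnak bound (a), the
Rankin–Selberg upper bound of Jiang–Meher (b), and the dyadic lower bound (c) produce, in every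
dyadic interval `(x, 2x]` with `x` large enough, both a negative and a positive value of
`λ(n)μ(n)`. -/
theorem sign_change_in_dyadic_intervals
    (lam mu : ℕ → ℝ)
    (ha : ∀ n : ℕ, 1 ≤ n →
      |lam n * mu n| ≤ (n.divisors.card : ℝ) ^ 2 * (n : ℝ) ^ ((7 : ℝ)/32))
    (hb : ∀ ε : ℝ, 0 < ε → ∃ Cε : ℝ, ∀ x : ℝ, 1 ≤ x →
      |∑ n ∈ Finset.Ioc ⌊x⌋₊ ⌊2 * x⌋₊, lam n * mu n| ≤ Cε * x ^ ((12 : ℝ)/17 + ε))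
    (hc : ∃ c : ℝ, 0 < c ∧ ∃ x₀ : ℝ, 2 ≤ x₀ ∧ ∀ x : ℝ, x₀ ≤ x →
      (∑ n ∈ Finset.Ioc ⌊x⌋₊ ⌊2 * x⌋₊, lam n ^ 2 * mu n ^ 2) ≥ c * x / (Real.log x) ^ 2) :
    ∃ x₁ : ℝ, ∀ x : ℝ, x₁ ≤ x →
      (∃ n : ℕ, x < (n : ℝ) ∧ (n : ℝ) ≤ 2 * x ∧ lam n * mu n < 0) ∧
      (∃ m : ℕ, x < (m : ℝ) ∧ (m : ℝ) ≤ 2 * x ∧ lam m * mu m > 0) := by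
  obtain ⟨c, hc0, x₀, hx₀2, hclow⟩ := hc
  obtain ⟨C₁, hC₁1, hC₁⟩ := divisor_bound ((1:ℝ)/200) (by norm_num)
  obtain ⟨C₂, hC₂⟩ := hb ((1:ℝ)/100) (by norm_num)
  have hC₂0 : 0 ≤ C₂ := by
    have h := hC₂ 1 le_rfl
    rw [Real.one_rpow] at h
    have h0 := abs_nonneg (∑ n ∈ Finset.Ioc ⌊(1:ℝ)⌋₊ ⌊2 * (1:ℝ)⌋₊, lam n * mu n)
    linarith
  set α : ℝ := (7:ℝ)/32 + 1/100 with hα_def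
  set β : ℝ := (12:ℝ)/17 + 1/100 with hβ_def
  set θ : ℝ := α + β with hθ_def
  have hθ1 : θ < 1 := by rw [hθ_def, hα_def, hβ_def]; norm_num
  have hθ0 : 0 < θ := by rw [hθ_def, hα_def, hβ_def]; norm_num
  set q : ℝ := (1 - θ)/4 with hq_def
  have hq0 : 0 < q := by rw [hq_def]; linarith
  set E : ℝ := 2 * C₁ ^ 2 * C₂ with hE_def
  have hE0 : 0 ≤ E := by positivity
  set D : ℝ := E / (c * q ^ 2) with hD_def
  have hD0 : 0 ≤ D := by positivity
  refine ⟨max x₀ ((D + 1) ^ ((4:ℝ)/(1 - θ))), fun x hx => ?_⟩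
  have hx₀x : x₀ ≤ x := le_trans (le_max_left _ _) hx
  have hx2 : 2 ≤ x := le_trans hx₀2 hx₀x
  have hx1 : 1 ≤ x := by linarith
  have hx0 : (0:ℝ) < x := by linarith
  set S := Finset.Ioc ⌊x⌋₊ ⌊2 * x⌋₊ with hS_def
  -- membership facts
  have hmem : ∀ n ∈ S, x < (n:ℝ) ∧ (n:ℝ) ≤ 2 * x ∧ 1 ≤ n := by
    intro n hn
    rw [hS_def, Finset.mem_Ioc] at hn
    have h1 : x < (n:ℝ) := by
      have h0 := Nat.lt_succ_floor x
      have h2 : (⌊x⌋₊ + 1 : ℝ) ≤ (n:ℝ) := by exact_mod_cast hn.1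
      calc x < (⌊x⌋₊ : ℝ) + 1 := by exact_mod_cast h0
        _ ≤ (n:ℝ) := h2
    refine ⟨h1, ?_, by omega⟩
    calc (n:ℝ) ≤ (⌊2*x⌋₊ : ℝ) := by exact_mod_cast hn.2
      _ ≤ 2 * x := Nat.floor_le (by linarith)
  -- the pointwise bound
  have hB : ∀ n ∈ S, |lam n * mu n| ≤ 2 * C₁ ^ 2 * x ^ α := by
    intro n hn
    obtain ⟨hn1, hn2, hn3⟩ := hmem n hn
    have hnR0 : (0:ℝ) < (n:ℝ) := lt_trans hx0 hn1
    have hd := hC₁ n hn3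
    have hd0 : (0:ℝ) ≤ (n.divisors.card : ℝ) := Nat.cast_nonneg _
    have hd2 : ((n.divisors.card : ℝ)) ^ 2 ≤ C₁ ^ 2 * (n:ℝ) ^ ((1:ℝ)/100) := by
      have hsq : ((n:ℝ) ^ ((1:ℝ)/200)) ^ 2 = (n:ℝ) ^ ((1:ℝ)/100) := by
        rw [← Real.rpow_natCast ((n:ℝ) ^ ((1:ℝ)/200)) 2,
          ← Real.rpow_mul hnR0.le]
        norm_num
      calc ((n.divisors.card : ℝ)) ^ 2 ≤ (C₁ * (n:ℝ) ^ ((1:ℝ)/200)) ^ 2 :=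
            pow_le_pow_left₀ hd0 hd 2
        _ = C₁ ^ 2 * ((n:ℝ) ^ ((1:ℝ)/200)) ^ 2 := by ring
        _ = C₁ ^ 2 * (n:ℝ) ^ ((1:ℝ)/100) := by rw [hsq]
    have hstep : |lam n * mu n| ≤ C₁ ^ 2 * (n:ℝ) ^ α := by
      have hadd : (n:ℝ) ^ ((1:ℝ)/100) * (n:ℝ) ^ ((7:ℝ)/32) = (n:ℝ) ^ α := by
        rw [← Real.rpow_add hnR0, hα_def]
        norm_num
      calc |lam n * mu n| ≤ (n.divisors.card : ℝ) ^ 2 * (n : ℝ) ^ ((7 : ℝ)/32) :=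
            ha n hn3
        _ ≤ (C₁ ^ 2 * (n:ℝ) ^ ((1:ℝ)/100)) * (n : ℝ) ^ ((7 : ℝ)/32) :=
            mul_le_mul_of_nonneg_right hd2 (by positivity)
        _ = C₁ ^ 2 * ((n:ℝ) ^ ((1:ℝ)/100) * (n : ℝ) ^ ((7 : ℝ)/32)) := mul_assoc _ _ _
        _ = C₁ ^ 2 * (n:ℝ) ^ α := by rw [hadd]
    have hnx : (n:ℝ) ^ α ≤ (2 * x) ^ α :=
      Real.rpow_le_rpow hnR0.le hn2 (by rw [hα_def]; norm_num)
    have h2x : (2 * x) ^ α ≤ 2 * x ^ α := by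
      rw [Real.mul_rpow (by norm_num) hx0.le]
      apply mul_le_mul_of_nonneg_right _ (by positivity)
      calc (2:ℝ) ^ α ≤ (2:ℝ) ^ (1:ℝ) :=
            Real.rpow_le_rpow_of_exponent_le (by norm_num) (by rw [hα_def]; norm_num)
        _ = 2 := Real.rpow_one 2
    have hC₁sq : (0:ℝ) ≤ C₁ ^ 2 := by positivity
    calc |lam n * mu n| ≤ C₁ ^ 2 * (n:ℝ) ^ α := hstep
      _ ≤ C₁ ^ 2 * (2 * x ^ α) := mul_le_mul_of_nonneg_left (le_trans hnx h2x) hC₁sq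
      _ = 2 * C₁ ^ 2 * x ^ α := by ring
  -- core contradiction
  have hcore : ¬ ((∀ n ∈ S, 0 ≤ lam n * mu n) ∨ (∀ n ∈ S, lam n * mu n ≤ 0)) := by
    intro hsign
    set X1 : ℝ := x ^ α with hX1_def
    set X2 : ℝ := x ^ β with hX2_def
    set X3 : ℝ := x ^ (2 * q) with hX3_def
    set X4 : ℝ := x ^ ((1 - θ)/2) with hX4_def
    have hX1pos : 0 < X1 := Real.rpow_pos_of_pos hx0 _
    have hX2pos : 0 < X2 := Real.rpow_pos_of_pos hx0 _
    have hX3pos : 0 < X3 := Real.rpow_pos_of_pos hx0 _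
    have hX4pos : 0 < X4 := Real.rpow_pos_of_pos hx0 _
    -- product identity
    have hprod : X1 * X2 * X3 * X4 = x := by
      rw [hX1_def, hX2_def, hX3_def, hX4_def, ← Real.rpow_add hx0, ← Real.rpow_add hx0,
        ← Real.rpow_add hx0]
      have hexp : α + β + 2 * q + (1 - θ)/2 = 1 := by
        rw [hq_def, hθ_def]
        ring
      rw [hexp, Real.rpow_one]
    -- upper bound for the square sum
    have hsum2 : ∑ n ∈ S, (lam n * mu n) ^ 2 ≤ (2 * C₁ ^ 2 * X1) * (C₂ * X2) := by
      calc ∑ n ∈ S, (lam n * mu n) ^ 2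
          ≤ (2 * C₁ ^ 2 * X1) * |∑ n ∈ S, lam n * mu n| :=
            sum_sq_le_of_sign S _ _ hB hsign
        _ ≤ (2 * C₁ ^ 2 * X1) * (C₂ * X2) := by
            apply mul_le_mul_of_nonneg_left _ (by positivity)
            exact hC₂ x hx1
    -- lower bound for the square sum
    have hlow : c * x / (Real.log x) ^ 2 ≤ ∑ n ∈ S, (lam n * mu n) ^ 2 := by
      have h := hclow x hx₀x
      have heq : ∑ n ∈ S, (lam n * mu n) ^ 2
          = ∑ n ∈ Finset.Ioc ⌊x⌋₊ ⌊2 * x⌋₊, lam n ^ 2 * mu n ^ 2 := by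
        rw [hS_def]
        exact Finset.sum_congr rfl fun n _ => mul_pow _ _ _
      rw [heq]
      exact h
    have hlogpos : 0 < Real.log x := Real.log_pos (by linarith)
    have hLx2 : 0 < (Real.log x) ^ 2 := by positivity
    -- log bound
    have hlogsq : (Real.log x) ^ 2 * q ^ 2 ≤ X3 := by
      have hlog : Real.log x ≤ x ^ q / q := Real.log_le_rpow_div hx0.le hq0
      have h1 : (Real.log x) ^ 2 ≤ (x ^ q / q) ^ 2 := pow_le_pow_left₀ hlogpos.le hlog 2
      have h2 : (x ^ q) ^ 2 = X3 := by
        rw [hX3_def, ← Real.rpow_natCast (x ^ q) 2, ← Real.rpow_mul hx0.le]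
        norm_num [mul_comm]
      have hq2 : (0:ℝ) < q ^ 2 := by positivity
      calc (Real.log x) ^ 2 * q ^ 2 ≤ (x ^ q / q) ^ 2 * q ^ 2 :=
            mul_le_mul_of_nonneg_right h1 hq2.le
        _ = (x ^ q) ^ 2 := by field_simp
        _ = X3 := h2
    -- lower bound for X4
    have hbig : D + 1 ≤ X4 := by
      have hxD : (D + 1) ^ ((4:ℝ)/(1 - θ)) ≤ x := le_trans (le_max_right _ _) hx
      have hD1 : (1:ℝ) ≤ D + 1 := by linarith
      have hne : (1:ℝ) - θ ≠ 0 := by linarith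
      calc D + 1 = (D + 1) ^ (1:ℝ) := (Real.rpow_one _).symm
        _ ≤ (D + 1) ^ (2:ℝ) := Real.rpow_le_rpow_of_exponent_le hD1 (by norm_num)
        _ = ((D + 1) ^ ((4:ℝ)/(1 - θ))) ^ ((1 - θ)/2) := by
            rw [← Real.rpow_mul (by linarith)]
            congr 1
            field_simp
            ring
        _ ≤ X4 := by
            rw [hX4_def]
            exact Real.rpow_le_rpow (by positivity) hxD (by linarith)
    clear_value X1 X2 X3 X4
    -- now pure algebra
    set Ssum : ℝ := ∑ n ∈ S, (lam n * mu n) ^ 2 with hSsum_def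
    have hSsum0 : 0 ≤ Ssum := Finset.sum_nonneg fun n _ => sq_nonneg _
    have hq2 : (0:ℝ) < q ^ 2 := by positivity
    have h1 : c * x ≤ Ssum * (Real.log x) ^ 2 := (div_le_iff₀ hLx2).mp hlow
    have h2 : c * x * q ^ 2 ≤ Ssum * ((Real.log x) ^ 2 * q ^ 2) := by
      calc c * x * q ^ 2 ≤ (Ssum * (Real.log x) ^ 2) * q ^ 2 :=
            mul_le_mul_of_nonneg_right h1 hq2.le
        _ = Ssum * ((Real.log x) ^ 2 * q ^ 2) := by ring
    have h3 : Ssum * ((Real.log x) ^ 2 * q ^ 2) ≤ Ssum * X3 :=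
      mul_le_mul_of_nonneg_left hlogsq hSsum0
    have h4 : Ssum * X3 ≤ (2 * C₁ ^ 2 * X1) * (C₂ * X2) * X3 :=
      mul_le_mul_of_nonneg_right hsum2 hX3pos.le
    have h5 : c * x * q ^ 2 ≤ E * (X1 * X2 * X3) := by
      have : (2 * C₁ ^ 2 * X1) * (C₂ * X2) * X3 = E * (X1 * X2 * X3) := by
        rw [hE_def]; ring
      linarith
    have h6 : c * q ^ 2 * X4 * (X1 * X2 * X3) ≤ E * (X1 * X2 * X3) := by
      calc c * q ^ 2 * X4 * (X1 * X2 * X3) = c * (X1 * X2 * X3 * X4) * q ^ 2 := by ring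
        _ = c * x * q ^ 2 := by rw [hprod]
        _ ≤ E * (X1 * X2 * X3) := h5
    have h7 : c * q ^ 2 * X4 ≤ E :=
      le_of_mul_le_mul_right h6 (by positivity)
    have h8 : E = D * (c * q ^ 2) := by
      rw [hD_def]
      field_simp
    nlinarith [mul_pos hc0 hq2, hbig, h7, h8]
  -- conclude
  constructor
  · by_contra hno
    push_neg at hno
    refine hcore (Or.inl fun n hn => ?_)
    obtain ⟨h1, h2, _⟩ := hmem n hn
    exact hno n h1 h2
  · by_contra hno
    push_neg at hno
    refine hcore (Or.inr fun n hn => ?_)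
    obtain ⟨h1, h2, _⟩ := hmem n hn
    exact hno n h1 h2
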